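/- Let D_μ and D_λ be weight diagrams with the same number r of ∨'s and identical typical entries (× and ∘ positions). There exists a right path from D_μ to D_λ (a sequence of right moves R_{i_1}∘⋯∘R_{i_k} with i_1 ≤ … ≤ i_k transforming D_μ into D_λ) if and only if, for every i, the position of the i-th ∨ (counted left to right) in D_μ is less than or equal to the position of the i-th ∨ in D_λ. -/

import Mathlib

/-! ## Weight diagrams, cap diagrams and right paths (Brundan–Stroppel / Brundan),
as used in "A Weyl-type character formula for PDC modules of gl(m|n)". -/

/-- The symbols of a weight diagram: `∨`, `∧`, `×`, `∘`. -/
inductive Tag : Type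
  | vee | wedge | ex | circ
  deriving DecidableEq

/-- A weight diagram: a function `ℤ → {∨,∧,×,∘}` with finitely many non-`∧` entries. -/
structure WDiag : Type where
  D : ℤ → Tag
  finite : {t : ℤ | D t ≠ Tag.wedge}.Finite

namespace WDiag

/-- The (finite) set of positions of `∨`'s. -/
noncomputable def veeFinset (W : WDiag) : Finset ℤ :=
  W.finite.toFinset.filter (fun t => W.D t = Tag.vee)

/-- The position of the `i`-th `∨`, counted from the left starting with `i = 0`
(junk value if `i` is out of range). -/
noncomputable def nthVee (W : WDiag) (i : ℕ) : ℤ :=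
  (W.veeFinset.sort (· ≤ ·)).getD i 0

/-- In the open interval `(p,q)` there are as many `∨`'s as `∧`'s. -/
def capBal (W : WDiag) (p q : ℤ) : Prop :=
  ((Finset.Ioo p q).filter (fun t => W.D t = Tag.vee)).card =
    ((Finset.Ioo p q).filter (fun t => W.D t = Tag.wedge)).card

/-- `(p,q)` is a cap of the cap diagram of `W`: `p` carries `∨`, `q` is the first `∧` to the
right of `p` such that the `∨`'s and `∧`'s strictly between `p` and `q` pair off.  This
balance condition characterizes the matching obtained by processing the `∨`'s right to left,
joining each `∨` to the first unmarked `∧` to its right. -/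
def IsCap (W : WDiag) (p q : ℤ) : Prop :=
  W.D p = Tag.vee ∧ W.D q = Tag.wedge ∧ p < q ∧ W.capBal p q ∧
    ∀ q', p < q' → q' < q → W.D q' = Tag.wedge → ¬ W.capBal p q'

/-- Cap `(p,q)` is nested (strictly) below cap `(p',q')`. -/
def CapBelow (p q p' q' : ℤ) : Prop := p' < p ∧ q < q'

/-- The diagram obtained by exchanging the `∨` at `p` with the `∧` at `q`. -/
noncomputable def moveDiag (W : WDiag) (p q : ℤ) : WDiag where
  D := fun t => if t = p then Tag.wedge else if t = q then Tag.vee else W.D t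
  finite := by
    classical
    refine Set.Finite.subset (W.finite.union (Set.toFinite {p, q})) ?_
    intro t ht
    by_cases h1 : t = p
    · exact Or.inr (by simp [h1])
    · by_cases h2 : t = q
      · exact Or.inr (by simp [h2])
      · left
        simpa [Set.mem_setOf_eq, h1, h2] using ht

/-- The right move `R_i` (as a relation): exchange the `i`-th `∨` (counted from the left,
`0`-based) with the `∧` to which it is joined by a cap. -/
def RMove (i : ℕ) (W W' : WDiag) : Prop :=
  i < W.veeFinset.card ∧ ∃ q, W.IsCap (W.nthVee i) q ∧ W' = W.moveDiag (W.nthVee i) q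

/-- `PathRel l W W'`: applying the right moves recorded in `l` (head first) turns `W`
into `W'`. -/
def PathRel : List ℕ → WDiag → WDiag → Prop
  | [], W, W' => W = W'
  | i :: l, W, W' => ∃ E, RMove i W E ∧ PathRel l E W'

/-- `l` is a right path from `W` to `W'`: a sequence of right moves
`R_{i₁} ∘ ⋯ ∘ R_{i_k}` with `i₁ ≤ … ≤ i_k`.  Since the composition is applied rightmost
factor first, the list of moves in order of application is weakly decreasing. -/
def IsRightPath (W W' : WDiag) (l : List ℕ) : Prop :=
  l.Chain' (fun a b => b ≤ a) ∧ PathRel l W W'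

/-- `W` and `W'` have the same typical entries (`×`'s and `∘`'s). -/
def SameTypical (W W' : WDiag) : Prop :=
  ∀ t, (W.D t = Tag.ex ↔ W'.D t = Tag.ex) ∧ (W.D t = Tag.circ ↔ W'.D t = Tag.circ)

/-- Totally connected: between any two `∨`'s there is no `∧`. -/
def TC (W : WDiag) : Prop :=
  ∀ p q t, W.D p = Tag.vee → W.D q = Tag.vee → p < t → t < q → W.D t ≠ Tag.wedge

/-- Totally disconnected: between any two `∨`'s there is at least one `∧`. -/
def TDC (W : WDiag) : Prop :=
  ∀ p q, W.D p = Tag.vee → W.D q = Tag.vee → p < q → ∃ t, p < t ∧ t < q ∧ W.D t = Tag.wedge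

/-- `[a,b]` is an atypical component: a maximal nonempty interval containing a `∨` and
no `∧` (maximality amounts to `∧`'s at the two positions just outside). -/
def IsComp (W : WDiag) (a b : ℤ) : Prop :=
  a ≤ b ∧ (∀ t ∈ Finset.Icc a b, W.D t ≠ Tag.wedge) ∧ (∃ t ∈ Finset.Icc a b, W.D t = Tag.vee)
    ∧ W.D (a - 1) = Tag.wedge ∧ W.D (b + 1) = Tag.wedge

/-- Piecewise disconnected (PDC): for any two consecutive atypical components `T_i = [a,b]`,
`T_{i+1} = [a',b']` (no atypical component strictly between them), the number `t_i` of `∨`'s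
in `T_i` is at most the number `s_i` of `∧`'s strictly between `T_i` and `T_{i+1}`. -/
def PDC (W : WDiag) : Prop :=
  ∀ a b a' b', W.IsComp a b → W.IsComp a' b' → b < a' →
    (∀ a'' b'', W.IsComp a'' b'' → ¬(b < a'' ∧ b'' < a')) →
    ((Finset.Icc a b).filter (fun t => W.D t = Tag.vee)).card ≤
      ((Finset.Ioo b a').filter (fun t => W.D t = Tag.wedge)).card

/-- Positions `x` and `y` lie in the same atypical component: no `∧` in between
(inclusively). -/
def SameComp (W : WDiag) (x y : ℤ) : Prop :=
  ∀ t ∈ Finset.Icc (min x y) (max x y), W.D t ≠ Tag.wedge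

/-- A labeled right move on a diagram with `r` labeled `∨`'s (the function `Fin r → ℤ`
records the current position of each labeled `∨`): the move `R_i` moves the label currently
occupying the position of the `i`-th `∨`. -/
def LMove (r : ℕ) (i : ℕ) (S S' : WDiag × (Fin r → ℤ)) : Prop :=
  ∃ (k : Fin r) (q : ℤ), S.2 k = S.1.nthVee i ∧ i < S.1.veeFinset.card ∧
    S.1.IsCap (S.2 k) q ∧ S'.1 = S.1.moveDiag (S.2 k) q ∧ S'.2 = Function.update S.2 k q

/-- Labeled version of `PathRel`. -/
def LPathRel (r : ℕ) : List ℕ → WDiag × (Fin r → ℤ) → WDiag × (Fin r → ℤ) → Prop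
  | [], S, S' => S = S'
  | i :: l, S, S' => ∃ E, LMove r i S E ∧ LPathRel r l E S'

/-- The path `l` from `Wmu` to `Wlam` induces the permutation `σ ∈ Tag(r)`: labeling the `∨`'s
of `Wmu` left to right by `0, …, r−1` and following them along the path, the `k`-th `∨` of
`Wmu` ends at the position of the `σ(k)`-th `∨` of `Wlam`. -/
def Induces (r : ℕ) (Wmu Wlam : WDiag) (l : List ℕ) (σ : Equiv.Perm (Fin r)) : Prop :=
  ∃ f : Fin r → ℤ, LPathRel r l (Wmu, fun k => Wmu.nthVee k) (Wlam, f) ∧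
    ∀ k : Fin r, f k = Wlam.nthVee (σ k)

end WDiag

/-- The weight diagram of a strictly dominant integral weight
`λ^ρ = Σ a_i ε_i − Σ b_j δ_j` of `gl(m|n)`:  put `∨` at `t` if `t ∈ {a_i} ∩ {b_j}`,
`×` if `t ∈ {a_i} ∖ {b_j}`, `∘` if `t ∈ {b_j} ∖ {a_i}`, and `∧` otherwise. -/
noncomputable def wdOf {m n : ℕ} (a : Fin m → ℤ) (b : Fin n → ℤ) : WDiag := by
  classical
  refine ⟨fun t => if ∃ i, a i = t then (if ∃ j, b j = t then Tag.vee else Tag.ex)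
      else (if ∃ j, b j = t then Tag.circ else Tag.wedge), ?_⟩
  refine Set.Finite.subset ((Set.finite_range a).union (Set.finite_range b)) ?_
  intro t ht
  by_cases hA : ∃ i, a i = t
  · exact Or.inl (by obtain ⟨i, hi⟩ := hA; exact ⟨i, hi⟩)
  · by_cases hB : ∃ j, b j = t
    · exact Or.inr (by obtain ⟨j, hj⟩ := hB; exact ⟨j, hj⟩)
    · exact absurd (by simp [Set.mem_setOf_eq, hA, hB]) ht

namespace WDiag

/-! ### Auxiliary lemmas -/

lemma mem_veeFinset {W : WDiag} {t : ℤ} : t ∈ W.veeFinset ↔ W.D t = Tag.vee := by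
  constructor
  · intro h; exact (Finset.mem_filter.1 h).2
  · intro h
    refine Finset.mem_filter.2 ⟨?_, h⟩
    simp only [Set.Finite.mem_toFinset, Set.mem_setOf_eq, h]
    intro hc; cases hc

lemma nthVee_eq {W : WDiag} {r : ℕ} (h : W.veeFinset.card = r) {i : ℕ} (hi : i < r) :
    W.nthVee i = W.veeFinset.orderEmbOfFin h ⟨i, hi⟩ := by
  rw [Finset.orderEmbOfFin_apply, nthVee]
  exact List.getD_eq_getElem _ _ (by rw [Finset.length_sort, h]; exact hi)

lemma nthVee_mem {W : WDiag} {r : ℕ} (h : W.veeFinset.card = r) {i : ℕ} (hi : i < r) :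
    W.nthVee i ∈ W.veeFinset := by
  rw [nthVee_eq h hi]; exact Finset.orderEmbOfFin_mem _ h _

lemma nthVee_strictMono {W : WDiag} {r : ℕ} (h : W.veeFinset.card = r) {i j : ℕ}
    (hij : i < j) (hj : j < r) : W.nthVee i < W.nthVee j := by
  rw [nthVee_eq h (lt_trans hij hj), nthVee_eq h hj]
  exact (W.veeFinset.orderEmbOfFin h).strictMono hij

lemma exists_index {W : WDiag} {r : ℕ} (h : W.veeFinset.card = r) {x : ℤ}
    (hx : x ∈ W.veeFinset) : ∃ i : ℕ, ∃ _ : i < r, W.nthVee i = x := by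
  have : x ∈ Set.range (W.veeFinset.orderEmbOfFin h) := by
    rw [Finset.range_orderEmbOfFin]; exact hx
  obtain ⟨j, hj⟩ := this
  exact ⟨j, j.2, by rw [nthVee_eq h j.2]; exact hj⟩

lemma nth_le_iff (s : Finset ℤ) {r : ℕ} (h : s.card = r) (i : Fin r) (v : ℤ) :
    s.orderEmbOfFin h i ≤ v ↔ (i : ℕ) < (s.filter (· ≤ v)).card := by
  classical
  constructor
  · intro hle
    have key : ∀ k : Fin (i + 1), s.orderEmbOfFin h ⟨k, lt_of_lt_of_le k.2 i.2⟩ ∈ s.filter (· ≤ v) := by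
      intro k
      refine Finset.mem_filter.2 ⟨Finset.orderEmbOfFin_mem _ _ _, ?_⟩
      refine le_trans ?_ hle
      exact (s.orderEmbOfFin h).monotone (by exact Fin.mk_le_mk.2 (Nat.lt_succ_iff.1 k.2))
    have hinj : Set.InjOn (fun k : Fin (i+1) => s.orderEmbOfFin h ⟨k, lt_of_lt_of_le k.2 i.2⟩)
        (Finset.univ : Finset (Fin (i+1))) := by
      intro a _ b _ hab
      have h2 : (a : ℕ) = (b : ℕ) := by
        simpa using (s.orderEmbOfFin h).injective hab
      exact Fin.ext h2
    have := Finset.card_le_card_of_injOn _ (fun a _ => key a) hinj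
    simpa using this
  · intro hcard
    by_contra hv
    push_neg at hv
    have key : ∀ w ∈ s.filter (· ≤ v), ∃ k : Fin r, k < i ∧ s.orderEmbOfFin h k = w := by
      intro w hw
      obtain ⟨hws, hwv⟩ := Finset.mem_filter.1 hw
      have : w ∈ Set.range (s.orderEmbOfFin h) := by rw [Finset.range_orderEmbOfFin]; exact hws
      obtain ⟨k, hk⟩ := this
      refine ⟨k, ?_, hk⟩
      by_contra hki
      push_neg at hki
      have : s.orderEmbOfFin h i ≤ s.orderEmbOfFin h k := (s.orderEmbOfFin h).monotone hki
      rw [hk] at this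
      exact absurd (lt_of_le_of_lt hwv hv) (not_lt.2 this)
    have hsub : s.filter (· ≤ v) ⊆ (Finset.Iio i).image (s.orderEmbOfFin h) := by
      intro w hw
      obtain ⟨k, hki, hk⟩ := key w hw
      exact Finset.mem_image.2 ⟨k, Finset.mem_Iio.2 hki, hk⟩
    have h1 := Finset.card_le_card hsub
    have h2 := Finset.card_image_le (s := Finset.Iio i) (f := s.orderEmbOfFin h)
    have h3 : (Finset.Iio i).card = (i : ℕ) := by simp
    omega

lemma nth_mono (s s' : Finset ℤ) {r : ℕ} (h : s.card = r) (h' : s'.card = r)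
    (hcount : ∀ v, (s'.filter (· ≤ v)).card ≤ (s.filter (· ≤ v)).card) (i : Fin r) :
    s.orderEmbOfFin h i ≤ s'.orderEmbOfFin h' i := by
  rw [nth_le_iff]
  exact lt_of_lt_of_le ((nth_le_iff s' h' i _).1 le_rfl) (hcount _)

lemma count_insert_erase (s : Finset ℤ) (p q : ℤ) (hp : p ∈ s) (hpq : p ≤ q)
    (v : ℤ) : ((insert q (s.erase p)).filter (· ≤ v)).card ≤ (s.filter (· ≤ v)).card := by
  classical
  rw [Finset.filter_insert, Finset.filter_erase]
  by_cases hqv : q ≤ v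
  · rw [if_pos hqv]
    have hpf : p ∈ s.filter (· ≤ v) := Finset.mem_filter.2 ⟨hp, le_trans hpq hqv⟩
    have h1 := Finset.card_insert_le q ((s.filter (· ≤ v)).erase p)
    have h2 := Finset.card_erase_of_mem hpf
    have h3 : 1 ≤ (s.filter (· ≤ v)).card := Finset.card_pos.2 ⟨p, hpf⟩
    omega
  · rw [if_neg hqv]
    exact Finset.card_le_card (Finset.erase_subset _ _)

lemma veeFinset_moveDiag {W : WDiag} {p q : ℤ} (hp : W.D p = Tag.vee)
    (hq : W.D q = Tag.wedge) :
    (W.moveDiag p q).veeFinset = insert q (W.veeFinset.erase p) := by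
  have hpq : p ≠ q := by intro h; rw [h, hq] at hp; cases hp
  ext t
  simp only [mem_veeFinset, Finset.mem_insert, Finset.mem_erase, mem_veeFinset, moveDiag]
  by_cases h1 : t = p
  · subst h1
    simp only [if_pos rfl, hp]
    constructor
    · intro h; cases h
    · rintro (h | h)
      · exact absurd h hpq
      · exact absurd rfl h.1
  · by_cases h2 : t = q
    · subst h2
      simp [if_neg h1, hq]
    · simp only [if_neg h1, if_neg h2]
      constructor
      · intro h; exact Or.inr ⟨h1, h⟩
      · rintro (h | h)
        · exact absurd h h2
        · exact h.2

lemma card_veeFinset_moveDiag {W : WDiag} {p q : ℤ} (hp : W.D p = Tag.vee)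
    (hq : W.D q = Tag.wedge) :
    (W.moveDiag p q).veeFinset.card = W.veeFinset.card := by
  have hpm : p ∈ W.veeFinset := mem_veeFinset.2 hp
  have hqm : q ∉ W.veeFinset := by
    intro hc; rw [mem_veeFinset.1 hc] at hq; cases hq
  rw [veeFinset_moveDiag hp hq,
    Finset.card_insert_of_notMem (fun hc => hqm (Finset.mem_of_mem_erase hc)),
    Finset.card_erase_of_mem hpm]
  have : 1 ≤ W.veeFinset.card := Finset.card_pos.2 ⟨p, hpm⟩
  omega

lemma sameTypical_moveDiag {W : WDiag} {p q : ℤ} (hp : W.D p = Tag.vee)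
    (hq : W.D q = Tag.wedge) : SameTypical W (W.moveDiag p q) := by
  intro t
  simp only [moveDiag]
  by_cases h1 : t = p
  · subst h1
    rw [if_pos rfl, hp]
    exact ⟨⟨nofun, nofun⟩, ⟨nofun, nofun⟩⟩
  · by_cases h2 : t = q
    · subst h2
      rw [if_neg h1, if_pos rfl, hq]
      exact ⟨⟨nofun, nofun⟩, ⟨nofun, nofun⟩⟩
    · rw [if_neg h1, if_neg h2]
      exact ⟨Iff.rfl, Iff.rfl⟩

lemma sameTypical_symm {W W' : WDiag} (h : SameTypical W W') : SameTypical W' W :=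
  fun t => ⟨(h t).1.symm, (h t).2.symm⟩

lemma sameTypical_trans {W W' W'' : WDiag} (h : SameTypical W W') (h' : SameTypical W' W'') :
    SameTypical W W'' :=
  fun t => ⟨(h t).1.trans (h' t).1, (h t).2.trans (h' t).2⟩

lemma eq_of_sameTypical_veeFinset {W W' : WDiag} (h : SameTypical W W')
    (hv : W.veeFinset = W'.veeFinset) : W = W' := by
  have hD : W.D = W'.D := by
    funext t
    cases h1 : W.D t with
    | vee =>
      have : t ∈ W'.veeFinset := hv ▸ mem_veeFinset.2 h1
      exact (mem_veeFinset.1 this).symm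
    | ex => exact ((h t).1.1 h1).symm
    | circ => exact ((h t).2.1 h1).symm
    | wedge =>
      cases h2 : W'.D t with
      | vee =>
        have : t ∈ W.veeFinset := hv ▸ mem_veeFinset.2 h2
        rw [mem_veeFinset.1 this] at h1; cases h1
      | wedge => rfl
      | ex => rw [(h t).1.2 h2] at h1; cases h1
      | circ => rw [(h t).2.2 h2] at h1; cases h1
  cases W; cases W'
  simp only at hD
  subst hD
  rfl

lemma veeFinset_eq_of_nthVee {W W' : WDiag} {r : ℕ} (hW : W.veeFinset.card = r)
    (hW' : W'.veeFinset.card = r) (h : ∀ j < r, W.nthVee j = W'.nthVee j) :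
    W.veeFinset = W'.veeFinset := by
  apply Finset.eq_of_subset_of_card_le
  · intro x hx
    obtain ⟨j, hj, hjx⟩ := exists_index hW hx
    rw [← hjx, h j hj]
    exact nthVee_mem hW' hj
  · rw [hW, hW']

lemma rmove_mono {i : ℕ} {W W' : WDiag} (h : RMove i W W') :
    W'.veeFinset.card = W.veeFinset.card ∧
      ∀ j < W.veeFinset.card, W.nthVee j ≤ W'.nthVee j := by
  obtain ⟨hi, q, hcap, hW'⟩ := h
  obtain ⟨hp, hq, hpq, -, -⟩ := hcap
  subst hW'
  have hcard := card_veeFinset_moveDiag hp hq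
  refine ⟨hcard, ?_⟩
  intro j hj
  have hpm : W.nthVee i ∈ W.veeFinset := mem_veeFinset.2 hp
  rw [nthVee_eq (rfl : W.veeFinset.card = W.veeFinset.card) hj, nthVee_eq hcard hj]
  apply nth_mono
  intro v
  rw [veeFinset_moveDiag hp hq]
  exact count_insert_erase _ _ _ hpm (le_of_lt hpq) v

lemma pathRel_mono : ∀ (l : List ℕ) (W W' : WDiag), PathRel l W W' →
    W'.veeFinset.card = W.veeFinset.card ∧
      ∀ j < W.veeFinset.card, W.nthVee j ≤ W'.nthVee j
  | [], W, W', h => by cases h; exact ⟨rfl, fun j _ => le_rfl⟩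
  | i :: l, W, W', h => by
    obtain ⟨E, hE, hrest⟩ := h
    obtain ⟨hc1, hm1⟩ := rmove_mono hE
    obtain ⟨hc2, hm2⟩ := pathRel_mono l E W' hrest
    exact ⟨hc2.trans hc1, fun j hj =>
      le_trans (hm1 j hj) (hm2 j (by omega))⟩

lemma pathRel_append : ∀ {l₁ : List ℕ} {l₂ : List ℕ} {W E W' : WDiag},
    PathRel l₁ W E → PathRel l₂ E W' → PathRel (l₁ ++ l₂) W W'
  | [], _, W, E, W', h1, h2 => by cases h1; exact h2
  | i :: l, _, W, E, W', h1, h2 => by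
    obtain ⟨F, hF, hrest⟩ := h1
    exact ⟨F, hF, pathRel_append hrest h2⟩

lemma chain'_replicate_append {i : ℕ} {l : List ℕ} (hl : ∀ x ∈ l, x ≤ i)
    (hc : l.Chain' (fun a b => b ≤ a)) :
    ∀ k, (List.replicate k i ++ l).Chain' (fun a b => b ≤ a)
  | 0 => hc
  | (k+1) => by
    rw [List.replicate_succ, List.cons_append, List.Chain', List.isChain_cons]
    refine ⟨?_, chain'_replicate_append hl hc k⟩
    intro b hb
    have hbm : b ∈ List.replicate k i ++ l := List.mem_of_mem_head? hb
    rcases List.mem_append.1 hbm with h | h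
    · exact (List.eq_of_mem_replicate h).le
    · exact hl b h

lemma step_lemma {W Wlam : WDiag} {r i : ℕ} (hi : i < r)
    (hW : W.veeFinset.card = r) (hlamc : Wlam.veeFinset.card = r)
    (htyp : SameTypical W Wlam)
    (hagree : ∀ j, i < j → j < r → W.nthVee j = Wlam.nthVee j)
    (hlt : W.nthVee i < Wlam.nthVee i) :
    ∃ W', RMove i W W' ∧ W'.veeFinset.card = r ∧ SameTypical W' Wlam ∧
      (∀ j, i < j → j < r → W'.nthVee j = Wlam.nthVee j) ∧
      (∀ j, j < i → W'.nthVee j = W.nthVee j) ∧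
      W.nthVee i < W'.nthVee i ∧ W'.nthVee i ≤ Wlam.nthVee i := by
  classical
  set p := W.nthVee i with hpdef
  set t := Wlam.nthVee i with htdef
  have hp : W.D p = Tag.vee := mem_veeFinset.1 (nthVee_mem hW hi)
  have hA : ∀ x, p < x → x ≤ t → W.D x ≠ Tag.vee := by
    intro x hx1 hx2 hx3
    obtain ⟨j, hj, hjx⟩ := exists_index hW (mem_veeFinset.2 hx3)
    have hij : i < j := by
      by_contra hc
      push_neg at hc
      rcases eq_or_lt_of_le hc with hc | hc
      · subst hc; omega
      · have := nthVee_strictMono hW hc hi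
        omega
    have h1 : x = Wlam.nthVee j := by rw [← hjx]; exact hagree j hij hj
    have h2 : t < Wlam.nthVee j := nthVee_strictMono hlamc hij hj
    omega
  have hwt : Wlam.D t = Tag.vee := mem_veeFinset.1 (nthVee_mem hlamc hi)
  have hDt : W.D t = Tag.wedge := by
    cases hc : W.D t with
    | vee => exact absurd hc (hA t hlt le_rfl)
    | wedge => rfl
    | ex => rw [(htyp t).1.1 hc] at hwt; cases hwt
    | circ => rw [(htyp t).2.1 hc] at hwt; cases hwt
  set S := (Finset.Ioc p t).filter (fun x => W.D x = Tag.wedge) with hS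
  have hSne : S.Nonempty := ⟨t, Finset.mem_filter.2 ⟨Finset.mem_Ioc.2 ⟨hlt, le_rfl⟩, hDt⟩⟩
  set q := S.min' hSne with hqdef
  have hqS := S.min'_mem hSne
  obtain ⟨hqIoc, hqD⟩ := Finset.mem_filter.1 hqS
  obtain ⟨hpq, hqt⟩ := Finset.mem_Ioc.1 hqIoc
  have hnw : ∀ x, p < x → x < q → W.D x ≠ Tag.wedge := by
    intro x h1 h2 h3
    have hxS : x ∈ S := Finset.mem_filter.2 ⟨Finset.mem_Ioc.2 ⟨h1, le_trans h2.le hqt⟩, h3⟩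
    exact absurd (S.min'_le x hxS) (not_le.2 h2)
  have hcap : W.IsCap p q := by
    refine ⟨hp, hqD, hpq, ?_, ?_⟩
    · unfold capBal
      have e1 : (Finset.Ioo p q).filter (fun x => W.D x = Tag.vee) = ∅ := by
        apply Finset.filter_eq_empty_iff.2
        intro x hx
        obtain ⟨h1, h2⟩ := Finset.mem_Ioo.1 hx
        exact hA x h1 (le_trans h2.le hqt)
      have e2 : (Finset.Ioo p q).filter (fun x => W.D x = Tag.wedge) = ∅ := by
        apply Finset.filter_eq_empty_iff.2
        intro x hx
        obtain ⟨h1, h2⟩ := Finset.mem_Ioo.1 hx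
        exact hnw x h1 h2
      rw [e1, e2]
    · intro q' h1 h2 h3
      exact absurd h3 (hnw q' h1 h2)
  have hcard' := card_veeFinset_moveDiag hp hqD
  have hc' : (W.moveDiag p q).veeFinset.card = r := hcard'.trans hW
  have hvee' : (W.moveDiag p q).veeFinset = insert q (W.veeFinset.erase p) :=
    veeFinset_moveDiag hp hqD
  set f : Fin r → ℤ := fun j => if (j : ℕ) = i then q else W.nthVee j with hfdef
  have hfm : ∀ j : Fin r, f j ∈ (W.moveDiag p q).veeFinset := by
    intro j
    rw [hvee']
    by_cases hji : (j : ℕ) = i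
    · simp [hfdef, hji]
    · have hmem : W.nthVee j ∈ W.veeFinset := nthVee_mem hW j.2
      have hne : W.nthVee j ≠ p := by
        intro hc
        rcases lt_trichotomy (j : ℕ) i with h | h | h
        · have := nthVee_strictMono hW h hi; omega
        · exact hji h
        · have := nthVee_strictMono hW h j.2; omega
      simp only [hfdef, if_neg hji]
      exact Finset.mem_insert.2 (Or.inr (Finset.mem_erase.2 ⟨hne, hmem⟩))
  have hfmono : StrictMono f := by
    intro j k hjk
    simp only [hfdef]
    have hjkn : (j : ℕ) < (k : ℕ) := hjk
    by_cases hji : (j : ℕ) = i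
    · rw [if_pos hji, if_neg (by omega)]
      -- q < W.nthVee k
      have hpk : p < W.nthVee k := by
        rw [hpdef]; exact nthVee_strictMono hW (by omega) k.2
      have hk : W.D (W.nthVee k) = Tag.vee := mem_veeFinset.1 (nthVee_mem hW k.2)
      rcases lt_trichotomy (W.nthVee k) q with h | h | h
      · exact absurd hk (hA _ hpk (le_trans h.le hqt))
      · rw [h] at hk; rw [hk] at hqD; cases hqD
      · exact h
    · rw [if_neg hji]
      by_cases hki : (k : ℕ) = i
      · rw [if_pos hki]
        have : W.nthVee j < p := by
          rw [hpdef]; exact nthVee_strictMono hW (by omega) hi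
        omega
      · rw [if_neg hki]
        exact nthVee_strictMono hW hjkn k.2
  have hfeq : f = (W.moveDiag p q).veeFinset.orderEmbOfFin hc' :=
    Finset.orderEmbOfFin_unique hc' hfm hfmono
  have hnth : ∀ j, ∀ hj : j < r, (W.moveDiag p q).nthVee j = if j = i then q else W.nthVee j := by
    intro j hj
    rw [nthVee_eq hc' hj, ← hfeq]
  refine ⟨W.moveDiag p q, ⟨by omega, q, hcap, rfl⟩, hc',
    sameTypical_trans (sameTypical_symm (sameTypical_moveDiag hp hqD)) htyp,
    ?_, ?_, ?_, ?_⟩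
  · intro j hj1 hj2
    rw [hnth j hj2, if_neg (by omega)]
    exact hagree j hj1 hj2
  · intro j hj
    rw [hnth j (by omega), if_neg (by omega)]
  · rw [hnth i hi, if_pos rfl]; exact hpq
  · rw [hnth i hi, if_pos rfl]; exact hqt

lemma phase {Wlam : WDiag} {r i : ℕ} (hi : i < r) (hlamc : Wlam.veeFinset.card = r) :
    ∀ n (W : WDiag), (Wlam.nthVee i - W.nthVee i).toNat ≤ n →
    W.veeFinset.card = r → SameTypical W Wlam →
    (∀ j, i < j → j < r → W.nthVee j = Wlam.nthVee j) →
    W.nthVee i ≤ Wlam.nthVee i →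
    ∃ (k : ℕ) (W' : WDiag), PathRel (List.replicate k i) W W' ∧
      W'.veeFinset.card = r ∧ SameTypical W' Wlam ∧
      (∀ j, i ≤ j → j < r → W'.nthVee j = Wlam.nthVee j) ∧
      (∀ j, j < i → W'.nthVee j = W.nthVee j) := by
  intro n
  induction n with
  | zero =>
    intro W hn hc ht ha hle
    have heq : W.nthVee i = Wlam.nthVee i := by omega
    refine ⟨0, W, rfl, hc, ht, ?_, fun j _ => rfl⟩
    intro j hj1 hj2
    rcases eq_or_lt_of_le hj1 with h | h
    · rw [← h]; exact heq
    · exact ha j h hj2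
  | succ n ih =>
    intro W hn hc ht ha hle
    rcases eq_or_lt_of_le hle with heq | hlt
    · refine ⟨0, W, rfl, hc, ht, ?_, fun j _ => rfl⟩
      intro j hj1 hj2
      rcases eq_or_lt_of_le hj1 with h | h
      · rw [← h]; exact heq
      · exact ha j h hj2
    · obtain ⟨W', hmove, hc', ht', ha', hlow, hlt', hle'⟩ :=
        step_lemma hi hc hlamc ht ha hlt
      have hn' : (Wlam.nthVee i - W'.nthVee i).toNat ≤ n := by omega
      obtain ⟨k, W'', hpath, hc'', ht'', ha'', hlow'⟩ := ih W' hn' hc' ht' ha' hle'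
      refine ⟨k + 1, W'', ?_, hc'', ht'', ha'', fun j hj => (hlow' j hj).trans (hlow j hj)⟩
      rw [List.replicate_succ]
      exact ⟨W', hmove, hpath⟩

lemma build {Wlam : WDiag} {r : ℕ} (hlamc : Wlam.veeFinset.card = r) :
    ∀ i, i ≤ r → ∀ W : WDiag, W.veeFinset.card = r → SameTypical W Wlam →
    (∀ j, i ≤ j → j < r → W.nthVee j = Wlam.nthVee j) →
    (∀ j, j < i → W.nthVee j ≤ Wlam.nthVee j) →
    ∃ l : List ℕ, (∀ x ∈ l, x < i + 1) ∧ l.Chain' (fun a b => b ≤ a) ∧ PathRel l W Wlam := by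
  intro i
  induction i with
  | zero =>
    intro _ W hc ht ha _
    have hWeq : W = Wlam := eq_of_sameTypical_veeFinset ht
      (veeFinset_eq_of_nthVee hc hlamc (fun j hj => ha j (Nat.zero_le j) hj))
    exact ⟨[], by simp, List.isChain_nil, hWeq⟩
  | succ i ih =>
    intro hir W hc ht ha hb
    have hi : i < r := hir
    obtain ⟨k, W', hpath, hc', ht', ha', hlow⟩ :=
      phase hi hlamc ((Wlam.nthVee i - W.nthVee i).toNat) W le_rfl hc ht
        (fun j hj1 hj2 => ha j hj1 hj2) (hb i (Nat.lt_succ_self i))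
    obtain ⟨l, hlx, hlchain, hlpath⟩ := ih (le_of_lt hir) W' hc' ht'
      (fun j hj1 hj2 => ha' j hj1 hj2)
      (fun j hj => (hlow j hj) ▸ hb j (Nat.lt_succ_of_lt hj))
    refine ⟨List.replicate k i ++ l, ?_, ?_, pathRel_append hpath hlpath⟩
    · intro x hx
      rcases List.mem_append.1 hx with h | h
      · rw [List.eq_of_mem_replicate h]; omega
      · have := hlx x h; omega
    · exact chain'_replicate_append (fun x hx => by have := hlx x hx; omega) hlchain k

end WDiag

open WDiag in
/-!
STATEMENT 6: Let `Wmu`, `Wlam` be weight diagrams with the same number `r` of `∨`'s and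
identical typical entries.  A right path from `Wmu` to `Wlam` exists iff for every `i` the
position of the `i`-th `∨` of `Wmu` is ≤ the position of the `i`-th `∨` of `Wlam`.
-/
theorem stmt6 (r : ℕ) (Wmu Wlam : WDiag)
    (hmu : Wmu.veeFinset.card = r) (hlam : Wlam.veeFinset.card = r)
    (htyp : WDiag.SameTypical Wmu Wlam) :
    (∃ l : List ℕ, WDiag.IsRightPath Wmu Wlam l) ↔
      ∀ i < r, Wmu.nthVee i ≤ Wlam.nthVee i := by
  constructor
  · rintro ⟨l, -, hpath⟩ i hir
    obtain ⟨hcard, hmono⟩ := WDiag.pathRel_mono l Wmu Wlam hpath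
    exact hmono i (by omega)
  · intro h
    obtain ⟨l, -, hchain, hpath⟩ := WDiag.build hlam r le_rfl Wmu hmu htyp
      (fun j hj1 hj2 => absurd hj2 (not_lt.2 hj1)) (fun j hj => h j hj)
    exact ⟨l, hchain, hpath⟩
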